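/- Define κ : ℝ → ℝ by κ(u) = 2(e^{|u|/2} − 1 − |u|/2)/(1 − e^{-u/2})² for u ≠ 0 and κ(0) = 1. Then κ is nondecreasing and continuous on ℝ. -/

import Mathlib

/-- The function `κ` from the Bernstein exponential condition lemma. -/
noncomputable def kappa (u : ℝ) : ℝ :=
  if u = 0 then 1
  else 2 * (Real.exp (|u| / 2) - 1 - |u| / 2) / (1 - Real.exp (-u / 2)) ^ 2

open Real Set Filter Topology

private lemma nonneg_of_deriv {f : ℝ → ℝ} {f' : ℝ → ℝ}
    (hd : ∀ x, HasDerivAt f (f' x) x) (h0 : f 0 = 0) (hnn : ∀ x, 0 ≤ f' x)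
    {t : ℝ} (ht : 0 ≤ t) : 0 ≤ f t := by
  have hmono : Monotone f := by
    refine monotone_of_deriv_nonneg (fun x => (hd x).differentiableAt) (fun x => ?_)
    rw [(hd x).deriv]; exact hnn x
  calc (0:ℝ) = f 0 := h0.symm
  _ ≤ f t := hmono ht

lemma keyP {t : ℝ} (ht : 0 ≤ t) : 0 ≤ Real.exp t ^ 2 - 4 * Real.exp t + (2 * t + 3) := by
  have h := nonneg_of_deriv (f := fun x => Real.exp x ^ 2 - 4 * Real.exp x + (2 * x + 3))
      (f' := fun x => 2 * (Real.exp x - 1) ^ 2) (fun x => ?_) (by norm_num) (fun x => by positivity) ht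
  · exact h
  · have h1 := Real.hasDerivAt_exp x
    have h2 := ((h1.pow 2).sub (h1.const_mul 4)).add (((hasDerivAt_id x).const_mul 2).add_const 3)
    refine h2.congr_deriv ?_
    simp
    all_goals ring

lemma keyQuad {t : ℝ} (ht : 0 ≤ t) : 1 + t + t ^ 2 / 2 ≤ Real.exp t := by
  have h := nonneg_of_deriv (f := fun x => Real.exp x - (x + 1 + x ^ 2 / 2))
      (f' := fun x => Real.exp x - (1 + x)) (fun x => ?_) (by simp)
      (fun x => by nlinarith [Real.add_one_le_exp x]) ht
  · linarith
  · have h1 := Real.hasDerivAt_exp x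
    have h2 := h1.sub (((hasDerivAt_id x).add_const 1).add (((hasDerivAt_id x).pow 2).div_const 2))
    refine h2.congr_deriv ?_
    simp
    all_goals ring

lemma keyQ {t : ℝ} (ht : 0 ≤ t) : 2 * t * Real.exp t + 1 ≤ Real.exp t ^ 2 := by
  have h := nonneg_of_deriv (f := fun x => Real.exp x ^ 2 - (2 * x * Real.exp x + 1))
      (f' := fun x => 2 * Real.exp x * (Real.exp x - 1 - x)) (fun x => ?_) (by simp)
      (fun x => by nlinarith [Real.add_one_le_exp x, Real.exp_pos x]) ht
  · simpa [sub_nonneg] using h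
  · have h1 := Real.hasDerivAt_exp x
    have h2 := (h1.pow 2).sub ((((hasDerivAt_id x).const_mul 2).mul h1).add_const 1)
    refine h2.congr_deriv ?_
    simp; ring

private lemma denom_ne {u : ℝ} (hu : u ≠ 0) : (1 - Real.exp (-u / 2)) ≠ 0 := by
  intro h
  have : Real.exp (-u / 2) = 1 := by linarith
  have h2 := (Real.exp_eq_one_iff (-u/2)).mp this
  apply hu
  linarith [h2]

private lemma basic_derivs (x : ℝ) :
    HasDerivAt (fun u : ℝ => u / 2) (1/2) x ∧
    HasDerivAt (fun u : ℝ => Real.exp (u / 2)) (Real.exp (x/2) * (1/2)) x ∧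
    HasDerivAt (fun u : ℝ => Real.exp (-u / 2)) (Real.exp (-x/2) * (-1/2)) x ∧
    HasDerivAt (fun u : ℝ => (1 - Real.exp (-u / 2)) ^ 2)
      ((1 - Real.exp (-x/2)) * Real.exp (-x/2)) x := by
  have hhalf : HasDerivAt (fun u : ℝ => u / 2) (1/2) x := by
    simpa using (hasDerivAt_id x).div_const 2
  have hneg : HasDerivAt (fun u : ℝ => -u / 2) (-1/2) x := by
    simpa using (hasDerivAt_id x).neg.div_const 2
  have hexp1 := hhalf.exp
  have hexp2 := hneg.exp
  refine ⟨hhalf, hexp1, hexp2, ?_⟩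
  have := (hexp2.const_sub 1).pow 2
  refine this.congr_deriv ?_
  simp
  ring

private lemma hasDerivAt_gpos (x : ℝ) (hx : x ≠ 0) :
    HasDerivAt (fun u : ℝ => 2 * (Real.exp (u / 2) - 1 - u / 2) / (1 - Real.exp (-u / 2)) ^ 2)
      (((Real.exp (x/2) - 1) * (1 - Real.exp (-x/2)) ^ 2 -
        2 * (Real.exp (x/2) - 1 - x/2) * ((1 - Real.exp (-x/2)) * Real.exp (-x/2))) /
        ((1 - Real.exp (-x/2)) ^ 2) ^ 2) x := by
  obtain ⟨hhalf, hexp1, hexp2, hD⟩ := basic_derivs x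
  have hN : HasDerivAt (fun u : ℝ => 2 * (Real.exp (u / 2) - 1 - u / 2))
      (Real.exp (x/2) - 1) x := by
    have := ((hexp1.sub_const 1).sub hhalf).const_mul 2
    refine this.congr_deriv ?_
    ring
  have hD0 : ((1 - Real.exp (-x / 2)) ^ 2) ≠ 0 := pow_ne_zero _ (denom_ne hx)
  exact hN.div hD hD0

private lemma hasDerivAt_gneg (x : ℝ) (hx : x ≠ 0) :
    HasDerivAt (fun u : ℝ => 2 * (Real.exp (-u / 2) - 1 - -u / 2) / (1 - Real.exp (-u / 2)) ^ 2)
      (((1 - Real.exp (-x/2)) * (1 - Real.exp (-x/2)) ^ 2 -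
        2 * (Real.exp (-x/2) - 1 - -x/2) * ((1 - Real.exp (-x/2)) * Real.exp (-x/2))) /
        ((1 - Real.exp (-x/2)) ^ 2) ^ 2) x := by
  obtain ⟨hhalf, hexp1, hexp2, hD⟩ := basic_derivs x
  have hneg : HasDerivAt (fun u : ℝ => -u / 2) (-1/2) x := by
    simpa using (hasDerivAt_id x).neg.div_const 2
  have hN : HasDerivAt (fun u : ℝ => 2 * (Real.exp (-u / 2) - 1 - -u / 2))
      (1 - Real.exp (-x/2)) x := by
    have := ((hexp2.sub_const 1).sub hneg).const_mul 2
    refine this.congr_deriv ?_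
    ring
  have hD0 : ((1 - Real.exp (-x / 2)) ^ 2) ≠ 0 := pow_ne_zero _ (denom_ne hx)
  exact hN.div hD hD0

private lemma dpos_nonneg {x : ℝ} (hx : 0 < x) :
    0 ≤ ((Real.exp (x/2) - 1) * (1 - Real.exp (-x/2)) ^ 2 -
        2 * (Real.exp (x/2) - 1 - x/2) * ((1 - Real.exp (-x/2)) * Real.exp (-x/2))) /
        ((1 - Real.exp (-x/2)) ^ 2) ^ 2 := by
  set a := Real.exp (x/2) with ha
  set b := Real.exp (-x/2) with hb
  have hbinv : b = a⁻¹ := by rw [ha, hb, ← Real.exp_neg]; congr 1; ring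
  have ha0 : 0 < a := Real.exp_pos _
  have hb0 : 0 < b := Real.exp_pos _
  have hb1 : b ≤ 1 := Real.exp_le_one_iff.mpr (by linarith)
  have hP := keyP (t := x/2) (by linarith)
  rw [← ha] at hP
  have hid : (a - 1) * (1 - b) ^ 2 - 2 * (a - 1 - x/2) * ((1 - b) * b) =
      (1 - b) * b * (a ^ 2 - 4 * a + (x + 3)) := by
    rw [hbinv]
    field_simp
    ring
  rw [hid]
  apply div_nonneg
  · apply mul_nonneg (mul_nonneg (by linarith) hb0.le)
    nlinarith [hP]
  · positivity

private lemma dneg_nonneg {x : ℝ} (hx : x < 0) :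
    0 ≤ ((1 - Real.exp (-x/2)) * (1 - Real.exp (-x/2)) ^ 2 -
        2 * (Real.exp (-x/2) - 1 - -x/2) * ((1 - Real.exp (-x/2)) * Real.exp (-x/2))) /
        ((1 - Real.exp (-x/2)) ^ 2) ^ 2 := by
  set b := Real.exp (-x/2) with hb
  have hb1 : 1 ≤ b := by
    rw [hb, ← Real.exp_zero]
    exact Real.exp_le_exp.mpr (by linarith)
  have hQ := keyQ (t := -x/2) (by linarith)
  rw [← hb] at hQ
  have hid : (1 - b) * (1 - b) ^ 2 - 2 * (b - 1 - -x/2) * ((1 - b) * b) =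
      (b - 1) * (b ^ 2 + x * b - 1) := by ring
  rw [hid]
  apply div_nonneg
  · apply mul_nonneg (by linarith)
    nlinarith [hQ]
  · positivity

private lemma kappa_zero : kappa 0 = 1 := by simp [kappa]

private lemma kappa_ge_one {u : ℝ} (hu : 0 ≤ u) : 1 ≤ kappa u := by
  rcases eq_or_lt_of_le hu with h | h
  · rw [← h, kappa_zero]
  · rw [kappa, if_neg (ne_of_gt h), abs_of_pos h]
    have hb1 : Real.exp (-u/2) < 1 := Real.exp_lt_one_iff.mpr (by linarith)
    have hpos : (0:ℝ) < (1 - Real.exp (-u / 2)) ^ 2 := pow_pos (by linarith) 2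
    rw [le_div_iff₀ hpos]
    have hq := keyQuad (t := u/2) (by linarith)
    have hexp := Real.add_one_le_exp (-u/2)
    have h1 : 1 - Real.exp (-u/2) ≤ u/2 := by linarith
    nlinarith [h1, hb1, hq]

private lemma kappa_le_one {u : ℝ} (hu : u ≤ 0) : kappa u ≤ 1 := by
  rcases lt_or_eq_of_le hu with h | h
  · rw [kappa, if_neg (ne_of_lt h), abs_of_neg h]
    have hb1 : 1 < Real.exp (-u/2) := by
      have := Real.exp_lt_exp.mpr (show (0:ℝ) < -u/2 by linarith)
      simpa using this
    have hpos : (0:ℝ) < (1 - Real.exp (-u / 2)) ^ 2 := by nlinarith [hb1]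
    rw [div_le_one hpos]
    have hP := keyP (t := -u/2) (by linarith)
    nlinarith [hP]
  · rw [h, kappa_zero]

private lemma ev_pos {x : ℝ} (hx : 0 < x) :
    kappa =ᶠ[nhds x]
      (fun u : ℝ => 2 * (Real.exp (u / 2) - 1 - u / 2) / (1 - Real.exp (-u / 2)) ^ 2) := by
  refine Filter.eventuallyEq_of_mem (isOpen_Ioi.mem_nhds hx) (fun u hu => ?_)
  have hu0 : (0:ℝ) < u := hu
  rw [kappa, if_neg (ne_of_gt hu0), abs_of_pos hu0]

private lemma ev_neg {x : ℝ} (hx : x < 0) :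
    kappa =ᶠ[nhds x]
      (fun u : ℝ => 2 * (Real.exp (-u / 2) - 1 - -u / 2) / (1 - Real.exp (-u / 2)) ^ 2) := by
  refine Filter.eventuallyEq_of_mem (isOpen_Iio.mem_nhds hx) (fun u hu => ?_)
  have hu0 : u < 0 := hu
  rw [kappa, if_neg (ne_of_lt hu0), abs_of_neg hu0]


private lemma tendsto_F1 :
    Filter.Tendsto (fun u : ℝ => 2 * (Real.exp (|u| / 2) - 1 - |u| / 2) / (|u| / 2) ^ 2)
      (nhdsWithin 0 {(0:ℝ)}ᶜ) (nhds 1) := by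
  have hb : Filter.Tendsto (fun u : ℝ => (2:ℝ)/9 * |u|) (nhdsWithin 0 {(0:ℝ)}ᶜ) (nhds 0) := by
    have h : Filter.Tendsto (fun u : ℝ => (2:ℝ)/9 * |u|) (nhds 0) (nhds 0) := by
      have := (continuous_abs.tendsto (0:ℝ)).const_mul ((2:ℝ)/9)
      simpa using this
    exact h.mono_left nhdsWithin_le_nhds
  have hev : ∀ᶠ u : ℝ in nhdsWithin 0 {(0:ℝ)}ᶜ, |u| < 2 ∧ u ≠ 0 := by
    have h1 : ∀ᶠ u : ℝ in nhds 0, |u| < 2 := by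
      filter_upwards [Metric.ball_mem_nhds (0:ℝ) (by norm_num : (0:ℝ) < 2)] with u hu
      simpa [Real.dist_eq] using hu
    filter_upwards [h1.filter_mono nhdsWithin_le_nhds, self_mem_nhdsWithin] with u h2 h0
    exact ⟨h2, h0⟩
  have hsq : Filter.Tendsto
      (fun u : ℝ => 2 * (Real.exp (|u| / 2) - 1 - |u| / 2) / (|u| / 2) ^ 2 - 1)
      (nhdsWithin 0 {(0:ℝ)}ᶜ) (nhds 0) := by
    apply squeeze_zero_norm' ?_ hb
    filter_upwards [hev] with u hu
    obtain ⟨h2, h0⟩ := hu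
    set r : ℝ := |u| / 2 with hr
    have hrpos : 0 < r := by
      have : 0 < |u| := abs_pos.mpr h0
      positivity
    have hr1 : |r| ≤ 1 := by
      rw [abs_of_pos hrpos]
      rw [hr]; linarith
    have hb3 := Real.exp_bound hr1 (by norm_num : 0 < 3)
    have hsum : ∑ m ∈ Finset.range 3, r ^ m / (m.factorial : ℝ) = 1 + r + r ^ 2 / 2 := by
      simp [Finset.sum_range_succ]
      all_goals ring
    rw [hsum] at hb3
    have hbound : |Real.exp r - (1 + r + r ^ 2 / 2)| ≤ r ^ 3 * (2/9) := by
      calc |Real.exp r - (1 + r + r ^ 2 / 2)| ≤ |r| ^ 3 * ((3:ℕ).succ / ((3:ℕ).factorial * 3)) := hb3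
      _ = r ^ 3 * (2/9) := by
          rw [abs_of_pos hrpos]
          norm_num [Nat.factorial]
    have hrearr : 2 * (Real.exp r - 1 - r) / r ^ 2 - 1 =
        2 * (Real.exp r - (1 + r + r ^ 2 / 2)) / r ^ 2 := by
      field_simp
      ring
    rw [hrearr, Real.norm_eq_abs, abs_div, abs_of_pos (pow_pos hrpos 2), div_le_iff₀ (pow_pos hrpos 2)]
    have habs2 : |2 * (Real.exp r - (1 + r + r ^ 2 / 2))| = 2 * |Real.exp r - (1 + r + r ^ 2 / 2)| := by
      rw [abs_mul]
      norm_num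
    rw [habs2]
    have hur : |u| = 2 * r := by rw [hr]; ring
    nlinarith [hbound, hrpos]
  have := hsq.add (tendsto_const_nhds (x := (1:ℝ)))
  simpa using this

private lemma tendsto_F2 :
    Filter.Tendsto (fun u : ℝ => (u / 2) ^ 2 / (1 - Real.exp (-u / 2)) ^ 2)
      (nhdsWithin 0 {(0:ℝ)}ᶜ) (nhds 1) := by
  have hd : HasDerivAt (fun u : ℝ => 1 - Real.exp (-u / 2)) (1/2) 0 := by
    obtain ⟨_, _, hexp2, _⟩ := basic_derivs 0
    have := hexp2.const_sub 1
    refine this.congr_deriv ?_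
    norm_num
  have hslope := hasDerivAt_iff_tendsto_slope.mp hd
  have h2 : Filter.Tendsto
      (fun u : ℝ => (((1:ℝ)/2) / slope (fun u : ℝ => 1 - Real.exp (-u / 2)) 0 u) ^ 2)
      (nhdsWithin 0 {(0:ℝ)}ᶜ) (nhds 1) := by
    have hdiv := (tendsto_const_nhds (x := (1:ℝ)/2) (f := nhdsWithin (0:ℝ) {(0:ℝ)}ᶜ)).div hslope (by norm_num)
    have := hdiv.pow 2
    norm_num at this
    exact this
  refine h2.congr' ?_ |>.mono_left le_rfl
  filter_upwards [self_mem_nhdsWithin] with u hu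
  have hu0 : u ≠ 0 := hu
  have hne := denom_ne hu0
  rw [slope_def_field]
  norm_num
  field_simp

private lemma kappa_continuous : Continuous kappa := by
  rw [continuous_iff_continuousAt]
  intro x
  by_cases hx : x = 0
  · subst hx
    have hmul := tendsto_F1.mul tendsto_F2
    norm_num at hmul
    have hk : Filter.Tendsto kappa (nhdsWithin 0 {(0:ℝ)}ᶜ) (nhds 1) := by
      refine hmul.congr' ?_
      filter_upwards [self_mem_nhdsWithin] with u hu
      have hu0 : u ≠ 0 := hu
      have hne := denom_ne hu0
      have habs : |u| ≠ 0 := abs_ne_zero.mpr hu0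
      rw [kappa, if_neg hu0]
      have hsq : (|u| / 2) ^ 2 = (u / 2) ^ 2 := by
        rw [div_pow, div_pow, sq_abs]
      rw [hsq]
      field_simp
    rw [ContinuousAt, kappa_zero, ← nhdsNE_sup_pure]
    rw [Filter.tendsto_sup]
    refine ⟨hk, ?_⟩
    have := tendsto_pure_nhds kappa 0
    rwa [kappa_zero] at this
  · have hne := denom_ne hx
    have hg : ContinuousAt
        (fun u : ℝ => 2 * (Real.exp (|u| / 2) - 1 - |u| / 2) / (1 - Real.exp (-u / 2)) ^ 2) x := by
      apply ContinuousAt.div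
      · fun_prop
      · fun_prop
      · exact pow_ne_zero _ hne
    apply hg.congr
    refine Filter.eventuallyEq_of_mem (compl_singleton_mem_nhds hx) (fun u hu => ?_)
    have hu0 : u ≠ 0 := hu
    rw [kappa, if_neg hu0]

private lemma kappa_monoIci : MonotoneOn kappa (Set.Ici 0) := by
  have hder : ∀ x : ℝ, 0 < x → HasDerivAt kappa
      (((Real.exp (x/2) - 1) * (1 - Real.exp (-x/2)) ^ 2 -
        2 * (Real.exp (x/2) - 1 - x/2) * ((1 - Real.exp (-x/2)) * Real.exp (-x/2))) /
        ((1 - Real.exp (-x/2)) ^ 2) ^ 2) x := fun x hx =>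
    (hasDerivAt_gpos x (ne_of_gt hx)).congr_of_eventuallyEq (ev_pos hx)
  apply monotoneOn_of_deriv_nonneg (convex_Ici 0) kappa_continuous.continuousOn
  · intro x hx
    rw [interior_Ici] at hx
    exact (hder x hx).differentiableAt.differentiableWithinAt
  · intro x hx
    rw [interior_Ici] at hx
    rw [(hder x hx).deriv]
    exact dpos_nonneg hx

private lemma kappa_monoIic : MonotoneOn kappa (Set.Iic 0) := by
  have hder : ∀ x : ℝ, x < 0 → HasDerivAt kappa
      (((1 - Real.exp (-x/2)) * (1 - Real.exp (-x/2)) ^ 2 -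
        2 * (Real.exp (-x/2) - 1 - -x/2) * ((1 - Real.exp (-x/2)) * Real.exp (-x/2))) /
        ((1 - Real.exp (-x/2)) ^ 2) ^ 2) x := fun x hx =>
    (hasDerivAt_gneg x (ne_of_lt hx)).congr_of_eventuallyEq (ev_neg hx)
  apply monotoneOn_of_deriv_nonneg (convex_Iic 0) kappa_continuous.continuousOn
  · intro x hx
    rw [interior_Iic] at hx
    exact (hder x hx).differentiableAt.differentiableWithinAt
  · intro x hx
    rw [interior_Iic] at hx
    rw [(hder x hx).deriv]
    exact dneg_nonneg hx

theorem stmt5 : Monotone kappa ∧ Continuous kappa := by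
  refine ⟨?_, kappa_continuous⟩
  intro a b hab
  rcases le_or_gt b 0 with hb | hb
  · exact kappa_monoIic (Set.mem_Iic.mpr (le_trans hab hb)) (Set.mem_Iic.mpr hb) hab
  · rcases le_or_gt 0 a with ha | ha
    · exact kappa_monoIci (Set.mem_Ici.mpr ha) (Set.mem_Ici.mpr (le_of_lt hb)) hab
    · exact le_trans (kappa_le_one (le_of_lt ha)) (kappa_ge_one (le_of_lt hb))
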